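/- Let α be a fixed positive rational. For every real ε > 0 there exists m₀ such that for every integer m ≥ m₀ there exists an integer n ≥ (1/2 − ε)·(e^{2α} − 1)·m² for which no m-large α-partition of n exists. In particular N(α, m) ≥ (1/2 − o(1))·(e^{2α} − 1)·m² as m → ∞. (This is the lower-bound half of the asymptotic N(α, m) = (1/2 + o(1))(e^{2α} − 1)m².) -/

import Mathlib

/-- An `α`-partition of `n`: a finite set of distinct positive integers summing to `n`
whose reciprocals sum to `α`. -/
def IsPartition (α : ℚ) (n : ℕ) (A : Finset ℕ) : Prop :=
  (∀ a ∈ A, 0 < a) ∧ (∑ a ∈ A, a) = n ∧ (∑ a ∈ A, (1 : ℚ) / a) = α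

set_option maxHeartbeats 1000000

-- harmonic sum upper bound
lemma harm_bound (m : ℕ) (hm : 2 ≤ m) : ∀ K : ℕ, m - 1 ≤ K →
    (∑ j ∈ Finset.Icc m K, (1:ℝ)/j) ≤ Real.log K - Real.log (m-1 : ℕ) := by
  refine Nat.le_induction ?_ ?_
  · rw [Finset.Icc_eq_empty (by omega)]
    simp
  · intro K hK ih
    have hK1 : 1 ≤ K := by omega
    have hKpos : (0:ℝ) < K := by exact_mod_cast hK1
    have hins : Finset.Icc m (K+1) = insert (K+1) (Finset.Icc m K) := by
      rw [← Finset.Ico_insert_right (by omega), Finset.Ico_add_one_right_eq_Icc]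
    rw [hins, Finset.sum_insert (by simp)]
    have hstep : (1:ℝ)/(K+1) ≤ Real.log (K+1) - Real.log K := by
      have h1 : (0:ℝ) < (K:ℝ)+1 := by positivity
      have h2 : (1:ℝ) - 1/((K:ℝ)+1) ≤ Real.exp (-(1/((K:ℝ)+1))) := by
        have := Real.add_one_le_exp (-(1/((K:ℝ)+1)))
        linarith
      have h3 : (K:ℝ)/((K:ℝ)+1) ≤ Real.exp (-(1/((K:ℝ)+1))) := by
        have : (K:ℝ)/((K:ℝ)+1) = 1 - 1/((K:ℝ)+1) := by field_simp; ring
        linarith [this ▸ h2]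
      have h4 : Real.log ((K:ℝ)/((K:ℝ)+1)) ≤ -(1/((K:ℝ)+1)) := by
        rw [Real.log_le_iff_le_exp (by positivity)]
        exact h3
      rw [Real.log_div (ne_of_gt hKpos) (ne_of_gt h1)] at h4
      push_cast
      linarith
    push_cast at hstep ⊢
    linarith

-- Gauss
lemma gauss_sum : ∀ n : ℕ, ∑ i ∈ Finset.range n, (i:ℝ) = n*(n-1)/2 := by
  intro n
  induction n with
  | zero => simp
  | succ k ih => rw [Finset.sum_range_succ, ih]; push_cast; ring

lemma icc_sum_ge (m K : ℕ) (h : m ≤ K) :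
    ((K:ℝ)^2 - (m:ℝ)^2)/2 ≤ ∑ j ∈ Finset.Icc m K, (j:ℝ) := by
  have h1 : Finset.Icc m K = Finset.Ico m (K+1) := by rw [Finset.Ico_add_one_right_eq_Icc]
  rw [h1, Finset.sum_Ico_eq_sub _ (by omega), gauss_sum, gauss_sum]
  have hm : (0:ℝ) ≤ m := Nat.cast_nonneg m
  have hK : (m:ℝ) ≤ K := by exact_mod_cast h
  push_cast
  nlinarith

-- main combinatorial lemma
lemma sum_ge (m K : ℕ) (hm : 1 ≤ m) (A : Finset ℕ) (hA : ∀ a ∈ A, m ≤ a)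
    (hrec : (∑ j ∈ Finset.Icc m K, (1:ℚ)/j) ≤ ∑ a ∈ A, (1:ℚ)/a) :
    (∑ j ∈ Finset.Icc m K, (j:ℚ)) ≤ ∑ a ∈ A, (a:ℚ) := by
  set B := Finset.Icc m K with hB
  have hsplitB : ∑ j ∈ B ∩ A, (1:ℚ)/j + ∑ j ∈ B \ A, (1:ℚ)/j = ∑ j ∈ B, (1:ℚ)/j :=
    Finset.sum_inter_add_sum_sdiff B A _
  have hsplitA : ∑ a ∈ A ∩ B, (1:ℚ)/a + ∑ a ∈ A \ B, (1:ℚ)/a = ∑ a ∈ A, (1:ℚ)/a :=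
    Finset.sum_inter_add_sum_sdiff A B _
  have hcomm : B ∩ A = A ∩ B := Finset.inter_comm B A
  have h1 : ∑ j ∈ B \ A, (1:ℚ)/j ≤ ∑ a ∈ A \ B, (1:ℚ)/a := by
    rw [hcomm] at hsplitB
    linarith
  have h2 : ∑ j ∈ B \ A, (j:ℚ) ≤ (K:ℚ)^2 * ∑ j ∈ B \ A, (1:ℚ)/j := by
    rw [Finset.mul_sum]
    refine Finset.sum_le_sum ?_
    intro j hj
    have hjB : j ∈ B := (Finset.mem_sdiff.mp hj).1
    rw [hB, Finset.mem_Icc] at hjB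
    have hj0 : (0:ℚ) < j := by exact_mod_cast (by omega : 0 < j)
    rw [mul_one_div, le_div_iff₀ hj0]
    have : (j:ℚ) ≤ K := by exact_mod_cast hjB.2
    nlinarith
  have h3 : (K:ℚ)^2 * ∑ a ∈ A \ B, (1:ℚ)/a ≤ ∑ a ∈ A \ B, (a:ℚ) := by
    rw [Finset.mul_sum]
    refine Finset.sum_le_sum ?_
    intro a ha
    have haA := (Finset.mem_sdiff.mp ha).1
    have haB := (Finset.mem_sdiff.mp ha).2
    have ham := hA a haA
    rw [hB, Finset.mem_Icc] at haB
    have haK : K < a := by omega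
    have ha0 : (0:ℚ) < a := by exact_mod_cast (by omega : 0 < a)
    rw [mul_one_div, div_le_iff₀ ha0]
    have : (K:ℚ) ≤ a := by exact_mod_cast le_of_lt haK
    nlinarith
  have h4 : (K:ℚ)^2 * ∑ j ∈ B \ A, (1:ℚ)/j ≤ (K:ℚ)^2 * ∑ a ∈ A \ B, (1:ℚ)/a :=
    mul_le_mul_of_nonneg_left h1 (by positivity)
  have hsB : ∑ j ∈ B ∩ A, (j:ℚ) + ∑ j ∈ B \ A, (j:ℚ) = ∑ j ∈ B, (j:ℚ) :=
    Finset.sum_inter_add_sum_sdiff B A _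
  have hsA : ∑ a ∈ A ∩ B, (a:ℚ) + ∑ a ∈ A \ B, (a:ℚ) = ∑ a ∈ A, (a:ℚ) :=
    Finset.sum_inter_add_sum_sdiff A B _
  rw [hcomm] at hsB
  linarith

/-- Lower-bound half of `N(α,m) = (1/2 + o(1))(e^{2α}-1)m²`: for fixed positive
rational `α` and every `ε > 0`, for all large `m`, there exists an integer
`n ≥ (1/2-ε)(e^{2α}-1)m²` admitting no `m`-large `α`-partition. -/
theorem nalpham_lower (α : ℚ) (hα : 0 < α) (ε : ℝ) (hε : 0 < ε) :
    ∃ m₀ : ℕ, ∀ m : ℕ, m₀ ≤ m →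
      ∃ n : ℕ, (1 / 2 - ε) * (Real.exp (2 * (α : ℝ)) - 1) * (m : ℝ) ^ 2 ≤ (n : ℝ) ∧
        ¬ ∃ A : Finset ℕ, IsPartition α n A ∧ ∀ a ∈ A, m ≤ a := by
  have hαR : (0:ℝ) < (α:ℝ) := by exact_mod_cast hα
  obtain ⟨E, hEdef⟩ : ∃ E, E = Real.exp (α:ℝ) := ⟨_, rfl⟩
  have hE1 : 1 < E := by
    rw [hEdef]
    have h := Real.exp_lt_exp.mpr hαR
    rwa [Real.exp_zero] at h
  have hE0 : 0 < E := lt_trans one_pos hE1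
  have hEsq : Real.exp (2*(α:ℝ)) = E*E := by
    rw [two_mul, Real.exp_add, ← hEdef]
  have hEE1 : (0:ℝ) < E*E - 1 := by
    nlinarith [mul_pos (sub_pos.mpr hE1) (show (0:ℝ) < E+1 by linarith)]
  have hb0 : 0 < E*(E+1)/(ε*(E*E-1)) := by
    exact div_pos (by nlinarith) (mul_pos hε hEE1)
  have ha0 : 0 < E/(E-1) := div_pos hE0 (by linarith)
  refine ⟨⌈2 + E/(E-1) + E*(E+1)/(ε*(E*E-1))⌉₊, ?_⟩
  intro m hm
  have hmR : 2 + E/(E-1) + E*(E+1)/(ε*(E*E-1)) ≤ (m:ℝ) := by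
    calc 2 + E/(E-1) + E*(E+1)/(ε*(E*E-1)) ≤ (⌈2 + E/(E-1) + E*(E+1)/(ε*(E*E-1))⌉₊ : ℝ) :=
          Nat.le_ceil _
      _ ≤ (m:ℝ) := by exact_mod_cast hm
  have hm2 : 2 ≤ m := by
    have : (2:ℝ) ≤ (m:ℝ) := by linarith
    exact_mod_cast this
  have hma : E/(E-1) ≤ (m:ℝ) := by linarith
  have hmb : E*(E+1)/(ε*(E*E-1)) ≤ (m:ℝ) := by linarith
  -- key derived inequalities
  have hkey1 : E ≤ (m:ℝ)*(E-1) := by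
    rw [div_le_iff₀ (by linarith)] at hma; linarith
  have hkey2 : E*(E+1) ≤ (m:ℝ)*(ε*(E*E-1)) := by
    rw [div_le_iff₀ (mul_pos hε hEE1)] at hmb; linarith
  obtain ⟨K, hKdef⟩ : ∃ K, K = ⌊((m:ℝ)-1)*E⌋₊ := ⟨_, rfl⟩
  have hm1R : (1:ℝ) ≤ (m:ℝ) - 1 := by
    have : (2:ℝ) ≤ (m:ℝ) := by exact_mod_cast hm2
    linarith
  have hprod0 : 0 ≤ ((m:ℝ)-1)*E := by nlinarith
  have hKle : (K:ℝ) ≤ ((m:ℝ)-1)*E := hKdef ▸ Nat.floor_le hprod0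
  have hKgt : ((m:ℝ)-1)*E < (K:ℝ) + 1 := hKdef ▸ Nat.lt_floor_add_one _
  have hKm : m ≤ K := by
    rw [hKdef]
    apply Nat.le_floor
    nlinarith
  have hK1 : 1 ≤ K := by omega
  have hK0R : (0:ℝ) < K := by exact_mod_cast hK1
  -- harmonic bound
  have hharm : (∑ j ∈ Finset.Icc m K, (1:ℝ)/j) ≤ (α:ℝ) := by
    have h1 := harm_bound m hm2 K (by omega)
    have hcast : ((m-1 : ℕ) : ℝ) = (m:ℝ) - 1 := by
      rw [Nat.cast_sub (by omega)]; norm_num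
    rw [hcast] at h1
    have h2 : Real.log K ≤ Real.log (((m:ℝ)-1)*E) :=
      Real.log_le_log hK0R hKle
    rw [Real.log_mul (by linarith) (ne_of_gt hE0), hEdef, Real.log_exp] at h2
    linarith
  have hharmQ : (∑ j ∈ Finset.Icc m K, (1:ℚ)/j) ≤ α := by
    have : ((∑ j ∈ Finset.Icc m K, (1:ℚ)/j : ℚ) : ℝ) ≤ ((α:ℚ):ℝ) := by
      push_cast
      exact hharm
    exact_mod_cast this
  obtain ⟨S, hSdef⟩ : ∃ S, S = ∑ j ∈ Finset.Icc m K, j := ⟨_, rfl⟩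
  have hSm : m ≤ S := by
    rw [hSdef]
    apply Finset.single_le_sum (f := fun i => i) (fun i _ => Nat.zero_le i)
    simp [Finset.mem_Icc]; omega
  have hS1 : 1 ≤ S := by omega
  refine ⟨S - 1, ?_, ?_⟩
  · -- size bound
    have hScast : (S:ℝ) = ∑ j ∈ Finset.Icc m K, (j:ℝ) := by
      rw [hSdef]; exact Nat.cast_sum _ _
    have hSge : ((K:ℝ)^2 - (m:ℝ)^2)/2 ≤ (S:ℝ) := by
      rw [hScast]; exact icc_sum_ge m K hKm
    have hncast : ((S - 1 : ℕ) : ℝ) = (S:ℝ) - 1 := by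
      rw [Nat.cast_sub hS1]; norm_num
    rw [hncast, hEsq]
    have hKlow : ((m:ℝ)-1)*E - 1 ≤ (K:ℝ) := by linarith
    have hKlow0 : (0:ℝ) ≤ ((m:ℝ)-1)*E - 1 := by nlinarith
    have hKsq : (((m:ℝ)-1)*E - 1)^2 ≤ (K:ℝ)^2 := by
      exact pow_le_pow_left₀ hKlow0 hKlow 2
    have hmain : (1/2 - ε) * (E*E - 1) * (m:ℝ)^2 ≤ ((((m:ℝ)-1)*E - 1)^2 - (m:ℝ)^2)/2 - 1 := by
      have h2m : (0:ℝ) ≤ 2*(m:ℝ) := by positivity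
      nlinarith [mul_le_mul_of_nonneg_left hkey2 h2m, sq_nonneg (E-1), sq_nonneg (E+1)]
    linarith
  · -- no partition
    rintro ⟨A, ⟨hpos, hsum, hrec⟩, hlarge⟩
    have h1 : (∑ j ∈ Finset.Icc m K, (j:ℚ)) ≤ ∑ a ∈ A, (a:ℚ) := by
      apply sum_ge m K (by omega) A hlarge
      rw [hrec]; exact hharmQ
    have h2 : ((S:ℚ)) ≤ ((S - 1 : ℕ) : ℚ) := by
      have hl : ((S:ℚ)) = ∑ j ∈ Finset.Icc m K, (j:ℚ) := by
        rw [hSdef]; exact Nat.cast_sum _ _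
      have hr : (∑ a ∈ A, (a:ℚ)) = ((S - 1 : ℕ) : ℚ) := by
        rw [← hsum]
        exact (Nat.cast_sum _ _).symm
      rw [hl, ← hr]; exact h1
    have h3 : S ≤ S - 1 := by exact_mod_cast h2
    omega
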